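/- Let m be a nonzero integer with |m| ≤ 2^{254}, let v := 1 + ⌊log₂|m|⌋ and let w := the largest i ∈ ℕ with 2^i ∣ m. Define ℓ := 4 + v + ⌊log₂ v⌋ - w - a - b, where a = (the largest i ∈ {0,…,⌊log₂ v⌋} such that 2^i divides v - 2^{⌊log₂ v⌋}) if w = v - 1 and a = 0 otherwise, and b = (the largest i ∈ {0,…,3} such that 2^i divides ⌊log₂ v⌋) if v is a power of two and b = 0 otherwise (every power of 2 divides 0). Then no bit string M of length strictly less than ℓ satisfies τ(M) = m; that is, ℓ is the length of the shortest takum representation of m. -/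

import Mathlib

/-- Integer value of a bit string read MSB → LSB. -/
def bitsToNat (L : List Bool) : ℕ :=
  L.foldl (fun a b => 2 * a + (if b then 1 else 0)) 0

/-- The (linear) takum decoding function `τ`. A bit string (MSB → LSB, padded on the
right with zero "ghost bits" as needed) consists of a sign bit `S`, a direction bit `D`,
three regime bits `R` with regime `r = int(R)` if `D = 1` and `r = 7 - int(R)` if
`D = 0`, `r` characteristic bits `C` with characteristic `c = 2^r - 1 + int(C)` if
`D = 1` and `c = -2^(r+1) + 1 + int(C)` if `D = 0`, and fraction bits `F` with fraction
`f = int(F)/2^p ∈ [0,1)`. The all-zeros string encodes `0` (`some 0`), `10…0` encodes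
NaR (`none`), and every other string encodes `((1 - 3S) + f) · 2^e` with exponent
`e = (-1)^S (c + S)`. -/
def takumVal : List Bool → Option ℚ
  | [] => some 0
  | S :: rest =>
    if rest.all (fun b => b == false) then
      if S then none else some 0
    else
      let D : Bool := rest.getD 0 false
      let rawR : ℕ := bitsToNat [rest.getD 1 false, rest.getD 2 false, rest.getD 3 false]
      let r : ℕ := if D then rawR else 7 - rawR
      let C : List Bool := (rest.drop 4).take r
      let Cpad : List Bool := C ++ List.replicate (r - C.length) false
      let c : ℤ := if D then 2 ^ r - 1 + (bitsToNat Cpad : ℤ)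
                   else -(2 ^ (r + 1)) + 1 + (bitsToNat Cpad : ℤ)
      let F : List Bool := rest.drop (4 + r)
      let f : ℚ := (bitsToNat F : ℚ) / 2 ^ F.length
      let s : ℤ := if S then 1 else 0
      let e : ℤ := (if S then -1 else 1) * (c + s)
      some (((1 - 3 * (s : ℚ)) + f) * 2 ^ e)

lemma foldl_bits (L : List Bool) (a : ℕ) :
    L.foldl (fun a b => 2 * a + (if b then 1 else 0)) a = a * 2 ^ L.length + bitsToNat L := by
  induction L generalizing a with
  | nil => simp [bitsToNat]
  | cons b t ih =>
    rw [bitsToNat, List.foldl_cons, List.foldl_cons, ih, ih, List.length_cons]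
    ring

lemma bitsToNat_lt (L : List Bool) : bitsToNat L < 2 ^ L.length := by
  induction L with
  | nil => simp [bitsToNat]
  | cons b t ih =>
    have : bitsToNat (b :: t) = (if b then 1 else 0) * 2 ^ t.length + bitsToNat t := by
      rw [bitsToNat, List.foldl_cons, foldl_bits]; simp
    rw [this, List.length_cons, pow_succ]
    cases b <;> simp <;> omega

lemma bitsToNat_append (L1 L2 : List Bool) :
    bitsToNat (L1 ++ L2) = bitsToNat L1 * 2 ^ L2.length + bitsToNat L2 := by
  rw [bitsToNat, List.foldl_append, foldl_bits]; rfl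

lemma bitsToNat_replicate (k : ℕ) : bitsToNat (List.replicate k false) = 0 := by
  induction k with
  | zero => simp [bitsToNat]
  | succ n ih =>
    have : bitsToNat (false :: List.replicate n false)
        = (if false then 1 else 0) * 2 ^ n + bitsToNat (List.replicate n false) := by
      rw [bitsToNat, List.foldl_cons, foldl_bits]; simp
    rw [List.replicate_succ, this]; simpa

set_option linter.unusedVariables false
set_option maxHeartbeats 2000000

/-- **Takum integer representation (minimality).**
Let `m ≠ 0` with `|m| ≤ 2^254`, `v = 1 + ⌊log₂ |m|⌋`, `w` the largest `i` with
`2^i ∣ m`, and `ℓ = 4 + v + ⌊log₂ v⌋ - w - a - b`, where `a` is the largest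
`i ∈ {0,…,⌊log₂ v⌋}` with `2^i ∣ v - 2^⌊log₂ v⌋` if `w = v - 1` (and `a = 0`
otherwise), and `b` is the largest `i ∈ {0,…,3}` with `2^i ∣ ⌊log₂ v⌋` if `v` is a
power of two (and `b = 0` otherwise). Then no bit string of length strictly less than
`ℓ` is a takum representation of `m`. -/
theorem takum_integer_representation_minimal (m : ℤ) (hm : m ≠ 0) (hbound : |m| ≤ 2 ^ 254)
    (v w ℓ : ℕ)
    (hv : v = 1 + Nat.log 2 m.natAbs)
    (hw1 : (2 : ℤ) ^ w ∣ m) (hw2 : ∀ i : ℕ, (2 : ℤ) ^ i ∣ m → i ≤ w)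
    (hℓ : ℓ = 4 + v + Nat.log 2 v - w -
      (if w = v - 1 then
        Nat.findGreatest (fun i => 2 ^ i ∣ (v - 2 ^ Nat.log 2 v)) (Nat.log 2 v)
       else 0) -
      (if v = 2 ^ Nat.log 2 v then
        Nat.findGreatest (fun i => 2 ^ i ∣ Nat.log 2 v) 3
       else 0)) :
    ∀ M : List Bool, M.length < ℓ → takumVal M ≠ some (m : ℚ) := by
  intro M hlen heq
  match M with
  | [] =>
    simp [takumVal] at heq
    exact hm (by exact_mod_cast heq.symm)
  | S :: rest =>
    rw [takumVal] at heq
    by_cases hall : rest.all (fun b => b == false)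
    · rw [if_pos hall] at heq
      cases S
      · simp at heq; exact hm (by exact_mod_cast heq.symm)
      · simp at heq
    · rw [if_neg hall] at heq
      simp only [Option.some.injEq] at heq
      simp only [List.length_cons] at hlen
      -- name components
      set D : Bool := rest.getD 0 false with hDdef
      set rawR : ℕ := bitsToNat [rest.getD 1 false, rest.getD 2 false, rest.getD 3 false]
        with hrawRdef
      set r : ℕ := if D then rawR else 7 - rawR with hrdef
      set C : List Bool := (rest.drop 4).take r with hCdef
      set cc : ℕ := bitsToNat (C ++ List.replicate (r - C.length) false) with hccdef
      set c : ℤ := if D then 2 ^ r - 1 + (cc : ℤ) else -(2 ^ (r + 1)) + 1 + (cc : ℤ) with hcdef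
      set N : ℕ := bitsToNat (rest.drop (4 + r)) with hNdef
      set P : ℕ := (rest.drop (4 + r)).length with hPdef
      -- basic facts
      have hrestlen : 1 ≤ rest.length := by
        rcases rest with _ | ⟨b, t⟩
        · simp at hall
        · simp
      have hClen : C.length = min r (rest.length - 4) := by
        rw [hCdef, List.length_take, List.length_drop]
      have hCr : C.length ≤ r := by omega
      have hcclt : cc < 2 ^ r := by
        have h1 := bitsToNat_lt (C ++ List.replicate (r - C.length) false)
        rw [List.length_append, List.length_replicate] at h1
        have h2 : C.length + (r - C.length) = r := by omega
        rw [h2] at h1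
        exact h1
      have hccmul : cc = bitsToNat C * 2 ^ (r - C.length) := by
        rw [hccdef, bitsToNat_append, bitsToNat_replicate, List.length_replicate]
        omega
      have hrawR7 : rawR ≤ 7 := by
        have h1 := bitsToNat_lt [rest.getD 1 false, rest.getD 2 false, rest.getD 3 false]
        simp only [List.length_cons, List.length_nil] at h1
        omega
      have hr7 : r ≤ 7 := by rw [hrdef]; split <;> omega
      have hNlt : N < 2 ^ P := bitsToNat_lt _
      have hPlen : P = rest.length - (4 + r) := List.length_drop
      -- facts about m
      have hmabs : m.natAbs ≠ 0 := by simpa using hm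
      have hk1v : 2 ^ (v - 1) ≤ m.natAbs := by
        have h1 := Nat.pow_log_le_self 2 hmabs
        have h2 : v - 1 = Nat.log 2 m.natAbs := by omega
        rwa [h2]
      have hk2v : m.natAbs < 2 ^ v := by
        have h1 := Nat.lt_pow_succ_log_self (b := 2) (by norm_num) m.natAbs
        have h2 : (Nat.log 2 m.natAbs).succ = v := by omega
        rwa [h2] at h1
      have hcastpow : ∀ i : ℕ, ((2:ℤ) ^ i).natAbs = 2 ^ i := by
        intro i
        rw [Int.natAbs_pow]
        rfl
      have hw1n : 2 ^ w ∣ m.natAbs := by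
        have h1 := Int.natAbs_dvd_natAbs.mpr hw1
        rwa [hcastpow w] at h1
      have hw2n : ∀ i : ℕ, 2 ^ i ∣ m.natAbs → i ≤ w := by
        intro i hi
        refine hw2 i (Int.natAbs_dvd_natAbs.mp ?_)
        rwa [hcastpow i]
      have hwlt : w < v := by
        have h1 : 2 ^ w ≤ m.natAbs := Nat.le_of_dvd (Nat.pos_of_ne_zero hmabs) hw1n
        have h2 := lt_of_le_of_lt h1 hk2v
        exact (Nat.pow_lt_pow_iff_right (by norm_num)).mp h2
      have hv1le : 1 ≤ v := by omega
      set k := Nat.log 2 v with hkdef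
      have hk1 : 2 ^ k ≤ v := Nat.pow_log_le_self 2 (by omega)
      have hk2 : v < 2 ^ (k + 1) := Nat.lt_pow_succ_log_self (by norm_num) v
      have habs_eq : w = v - 1 → m.natAbs = 2 ^ (v - 1) := by
        intro hwv
        obtain ⟨t, ht⟩ := hw1n
        rw [hwv] at ht
        have h2 : 2 ^ (v - 1) * t < 2 ^ v := ht ▸ hk2v
        have hvv : 2 ^ v = 2 ^ (v - 1) * 2 := by rw [← pow_succ]; congr 1; omega
        rw [hvv] at h2
        have ht2 : t < 2 := lt_of_mul_lt_mul_left h2 (by positivity)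
        have ht0 : t ≠ 0 := by rintro rfl; rw [mul_zero] at ht; exact hmabs ht
        have ht1 : t = 1 := by omega
        rw [ht1, mul_one] at ht
        exact ht
      have h2P : (0:ℚ) < 2 ^ P := by positivity
      have hf0 : (0:ℚ) ≤ (N:ℚ) / 2 ^ P := by positivity
      have hf1 : (N:ℚ) / 2 ^ P < 1 := by
        rw [div_lt_one h2P]
        exact_mod_cast hNlt
      clear_value D rawR r C cc c N P
      have hmabsQ1 : (2:ℚ) ^ ((v:ℤ) - 1) ≤ (m.natAbs : ℚ) := by
        have h3 : ((v:ℤ) - 1) = ((v - 1 : ℕ) : ℤ) := by omega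
        rw [h3, zpow_natCast]
        exact_mod_cast hk1v
      have hmabsQ2 : (m.natAbs : ℚ) < 2 ^ (v:ℤ) := by
        rw [zpow_natCast]
        exact_mod_cast hk2v
      cases S with
      | false =>
        norm_num at heq
        -- heq : (1 + ↑N / 2 ^ P) * 2 ^ c = ↑m
        have hc0 : (0:ℚ) < (2:ℚ) ^ c := zpow_pos (by norm_num) c
        have hmlow : (2:ℚ) ^ c ≤ (m:ℚ) := by
          have h1 : (1:ℚ) * 2 ^ c ≤ (1 + (N:ℚ)/2^P) * 2 ^ c :=
            mul_le_mul_of_nonneg_right (by linarith) (le_of_lt hc0)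
          rw [one_mul, heq] at h1
          exact h1
        have hmhigh : (m:ℚ) < (2:ℚ) ^ (c + 1) := by
          have h1 : (1 + (N:ℚ)/2^P) * 2 ^ c < 2 * 2 ^ c :=
            mul_lt_mul_of_pos_right (by linarith) hc0
          rw [heq] at h1
          rw [zpow_add_one₀ (by norm_num : (2:ℚ) ≠ 0)]
          linarith
        have hmpos : 0 < m := by exact_mod_cast lt_of_lt_of_le hc0 hmlow
        have hmabsm : ((m.natAbs : ℚ)) = (m:ℚ) := by
          rw [Nat.cast_natAbs]
          exact_mod_cast abs_of_pos hmpos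
        rw [hmabsm] at hmabsQ1 hmabsQ2
        have hce : c = (v:ℤ) - 1 := by
          have h1 : c < (v:ℤ) :=
            (zpow_lt_zpow_iff_right₀ (by norm_num : (1:ℚ) < 2)).mp (lt_of_le_of_lt hmlow hmabsQ2)
          have h2 : (v:ℤ) - 1 < c + 1 :=
            (zpow_lt_zpow_iff_right₀ (by norm_num : (1:ℚ) < 2)).mp (lt_of_le_of_lt hmabsQ1 hmhigh)
          omega
        have hcclti : (cc:ℤ) < 2 ^ r := by exact_mod_cast hcclt
        have hDtrue : D = true := by
          by_contra hDf
          have hDf' : D = false := by simpa using hDf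
          rw [hcdef, hDf'] at hce
          simp only [Bool.false_eq_true, if_false] at hce
          have hp : ((2:ℤ)) ^ (r + 1) = 2 * 2 ^ r := by ring
          have hx : (0:ℤ) < 2 ^ r := by positivity
          omega
        have hce' : 2 ^ r - 1 + (cc:ℤ) = (v:ℤ) - 1 := by
          rw [hcdef, hDtrue] at hce
          simpa using hce
        have hrv : 2 ^ r + cc = v := by
          have hx : (0:ℤ) < 2 ^ r := by positivity
          have h1 : ((2 ^ r + cc : ℕ) : ℤ) = (v:ℤ) := by push_cast; omega
          exact_mod_cast h1
        have hrk : r = k := by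
          have h1 : Nat.log 2 v = r :=
            Nat.log_eq_of_pow_le_of_lt_pow (by omega) (by rw [pow_succ]; omega)
          omega
        have hrawRr : rawR = r := by rw [hrdef, hDtrue]; simp
        rw [hce] at heq
        have hvz : ((v:ℤ) - 1) = ((v - 1 : ℕ) : ℤ) := by omega
        rw [hvz, zpow_natCast] at heq
        have heqZ : ((2 ^ P + N : ℕ) : ℤ) * 2 ^ (v - 1) = m * 2 ^ P := by
          have hQ : ((2 ^ P + N : ℕ) : ℚ) * 2 ^ (v - 1) = (m:ℚ) * 2 ^ P := by
            push_cast
            field_simp at heq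
            linear_combination heq
          exact_mod_cast hQ
        have hPbound : v ≤ P + w + 1 := by
          by_contra hcon
          push_neg at hcon
          have hsplit : (2:ℤ) ^ (v - 1) = 2 ^ P * 2 ^ (v - 1 - P) := by
            rw [← pow_add]; congr 1; omega
          have hkey : ((2 ^ P + N : ℕ) : ℤ) * 2 ^ (v - 1 - P) = m := by
            have h2 : ((2:ℤ) ^ P) ≠ 0 := by positivity
            apply mul_right_cancel₀ h2
            calc ((2 ^ P + N : ℕ) : ℤ) * 2 ^ (v - 1 - P) * 2 ^ P
                = ((2 ^ P + N : ℕ) : ℤ) * (2 ^ P * 2 ^ (v - 1 - P)) := by ring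
              _ = m * 2 ^ P := by rw [← hsplit]; exact heqZ
          have hdvd : (2:ℤ) ^ (v - 1 - P) ∣ m :=
            ⟨((2 ^ P + N : ℕ) : ℤ), by rw [← hkey]; ring⟩
          have := hw2 _ hdvd
          omega
        by_cases hwv1 : w = v - 1
        · rw [if_pos hwv1] at hℓ
          by_cases hpow : v = 2 ^ k
          · have hcc0 : cc = 0 := by rw [hrk] at hrv; omega
            have ha : Nat.findGreatest (fun i => 2 ^ i ∣ (v - 2 ^ k)) k = k := by
              have h1 : v - 2 ^ k = 0 := by omega
              rw [h1]
              exact le_antisymm (Nat.findGreatest_le k) (Nat.le_findGreatest le_rfl (dvd_zero _))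
            rw [if_pos hpow, ha] at hℓ
            rcases Nat.lt_or_ge rest.length 4 with hL4 | hL4
            · have hb3 : Nat.findGreatest (fun i => 2 ^ i ∣ k) 3 ≤ 3 := Nat.findGreatest_le 3
              rcases (by omega : rest.length = 1 ∨ rest.length = 2 ∨ rest.length = 3)
                with h1 | h2 | h3
              · have e1 : rest.getD 1 false = false := List.getD_eq_default _ _ (by omega)
                have e2 : rest.getD 2 false = false := List.getD_eq_default _ _ (by omega)
                have e3 : rest.getD 3 false = false := List.getD_eq_default _ _ (by omega)
                rw [e1, e2, e3] at hrawRdef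
                simp [bitsToNat] at hrawRdef
                have hb : Nat.findGreatest (fun i => 2 ^ i ∣ k) 3 = 3 :=
                  le_antisymm hb3 (Nat.le_findGreatest le_rfl (by
                    have hk0 : k = 0 := by omega
                    rw [hk0]; exact dvd_zero _))
                omega
              · have e2 : rest.getD 2 false = false := List.getD_eq_default _ _ (by omega)
                have e3 : rest.getD 3 false = false := List.getD_eq_default _ _ (by omega)
                rw [e2, e3] at hrawRdef
                have hdv : 4 ∣ rawR := by
                  cases hg : rest.getD 1 false <;> rw [hg] at hrawRdef <;>
                    simp [bitsToNat] at hrawRdef <;> omega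
                have hb : 2 ≤ Nat.findGreatest (fun i => 2 ^ i ∣ k) 3 :=
                  Nat.le_findGreatest (by norm_num)
                    (by have h4 : (2:ℕ)^2 = 4 := by norm_num
                        rw [h4]; omega)
                omega
              · have e3 : rest.getD 3 false = false := List.getD_eq_default _ _ (by omega)
                rw [e3] at hrawRdef
                have hdv : 2 ∣ rawR := by
                  cases hg1 : rest.getD 1 false <;> cases hg2 : rest.getD 2 false <;>
                    rw [hg1, hg2] at hrawRdef <;>
                    simp [bitsToNat] at hrawRdef <;> omega
                have hb : 1 ≤ Nat.findGreatest (fun i => 2 ^ i ∣ k) 3 :=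
                  Nat.le_findGreatest (by norm_num)
                    (by have h4 : (2:ℕ)^1 = 2 := by norm_num
                        rw [h4]; omega)
                omega
            · omega
          · rw [if_neg hpow] at hℓ
            have hccne : cc ≠ 0 := by
              intro h0
              apply hpow
              rw [hrk] at hrv
              omega
            have hvk : v - 2 ^ k = cc := by rw [hrk] at hrv; omega
            have hdvd : 2 ^ (r - C.length) ∣ (v - 2 ^ k) := by
              rw [hvk, hccmul]; exact dvd_mul_left _ _
            have haa : r - C.length ≤ Nat.findGreatest (fun i => 2 ^ i ∣ (v - 2 ^ k)) k :=
              Nat.le_findGreatest (by omega) hdvd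
            have hklt : Nat.findGreatest (fun i => 2 ^ i ∣ (v - 2 ^ k)) k < k := by
              rcases Nat.lt_or_ge (Nat.findGreatest (fun i => 2 ^ i ∣ (v - 2 ^ k)) k) k with h | h
              · exact h
              · exfalso
                have hle := Nat.findGreatest_le (P := fun i => 2 ^ i ∣ (v - 2 ^ k)) k
                have heqk : Nat.findGreatest (fun i => 2 ^ i ∣ (v - 2 ^ k)) k = k := by omega
                have hk0 : k ≠ 0 := by
                  intro h0
                  rw [hrk, h0, pow_zero] at hcclt
                  omega
                have hPk := Nat.findGreatest_of_ne_zero heqk hk0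
                rw [hvk] at hPk
                have := Nat.le_of_dvd (Nat.pos_of_ne_zero hccne) hPk
                rw [hrk] at hcclt
                omega
            omega
        · rw [if_neg hwv1] at hℓ
          omega
      | true =>
        norm_num at heq
        -- heq : (-2 + ↑N / 2 ^ P) * 2 ^ (-1 + -c) = ↑m
        set E : ℤ := -1 + -c with hEdef
        clear_value E
        have hE0 : (0:ℚ) < (2:ℚ) ^ E := zpow_pos (by norm_num) E
        have hmval : -(m:ℚ) = (2 - (N:ℚ)/2^P) * 2 ^ E := by linear_combination heq
        have hmneg' : m < 0 := by
          have h1 : (0:ℚ) < (2 - (N:ℚ)/2^P) * 2 ^ E :=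
            mul_pos (by linarith) hE0
          rw [← hmval] at h1
          have : (m:ℚ) < 0 := by linarith
          exact_mod_cast this
        have hmabsm : ((m.natAbs : ℚ)) = -(m:ℚ) := by
          rw [Nat.cast_natAbs]
          exact_mod_cast abs_of_neg hmneg'
        have hmlow : (2:ℚ) ^ E < (m.natAbs:ℚ) := by
          rw [hmabsm, hmval]
          have h1 : (1:ℚ) * 2 ^ E < (2 - (N:ℚ)/2^P) * 2 ^ E :=
            mul_lt_mul_of_pos_right (by linarith) hE0
          linarith
        have hmhigh : (m.natAbs:ℚ) ≤ (2:ℚ) ^ (E + 1) := by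
          rw [hmabsm, hmval, zpow_add_one₀ (by norm_num : (2:ℚ) ≠ 0)]
          have h1 : (2 - (N:ℚ)/2^P) * 2 ^ E ≤ 2 * 2 ^ E :=
            mul_le_mul_of_nonneg_right (by linarith) (le_of_lt hE0)
          linarith
        have hE1 : E < (v:ℤ) :=
          (zpow_lt_zpow_iff_right₀ (by norm_num : (1:ℚ) < 2)).mp (lt_of_lt_of_le hmlow (le_of_lt hmabsQ2))
        have hE2 : (v:ℤ) - 1 ≤ E + 1 :=
          (zpow_le_zpow_iff_right₀ (by norm_num : (1:ℚ) < 2)).mp (le_trans hmabsQ1 hmhigh)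
        have hcclti : (cc:ℤ) < 2 ^ r := by exact_mod_cast hcclt
        by_cases hwv1 : w = v - 1
        · have habs := habs_eq hwv1
          have hEe : E = (v:ℤ) - 2 := by
            rcases (by omega : E = (v:ℤ) - 2 ∨ E = (v:ℤ) - 1) with h | h
            · exact h
            · exfalso
              rw [h] at hmlow
              have h3 : ((v:ℤ) - 1) = ((v - 1 : ℕ) : ℤ) := by omega
              rw [h3, zpow_natCast] at hmlow
              have h4 : ((2 ^ (v-1) : ℕ) : ℚ) < ((m.natAbs : ℕ) : ℚ) := by
                push_cast
                convert hmlow using 2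
              have h5 : 2 ^ (v-1) < m.natAbs := by exact_mod_cast h4
              omega
          rw [if_pos hwv1] at hℓ
          by_cases hv1 : v = 1
          · have hk0 : k = 0 := by rw [hkdef, hv1]; exact Nat.log_one_right 2
            have hpow : v = 2 ^ k := by rw [hv1, hk0]; norm_num
            have ha0 : Nat.findGreatest (fun i => 2 ^ i ∣ (v - 2 ^ k)) k = 0 := by
              rw [hk0]
              exact Nat.findGreatest_zero
            have hb3 : Nat.findGreatest (fun i => 2 ^ i ∣ k) 3 = 3 := by
              rw [hk0]
              exact le_antisymm (Nat.findGreatest_le 3) (Nat.le_findGreatest le_rfl (dvd_zero _))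
            rw [if_pos hpow, ha0, hb3] at hℓ
            omega
          · have hcE : c = 1 - (v:ℤ) := by omega
            have hDf : D = false := by
              by_contra hDt
              have hDt' : D = true := by simpa using hDt
              rw [hcdef, hDt'] at hcE
              simp only [if_true] at hcE
              have hx : (0:ℤ) < 2 ^ r := by positivity
              omega
            have hcE' : -(2:ℤ) ^ (r + 1) + 1 + (cc:ℤ) = 1 - (v:ℤ) := by
              rw [hcdef, hDf] at hcE
              simpa using hcE
            have hrv : v + cc = 2 ^ (r + 1) := by
              have h1 : ((v + cc : ℕ) : ℤ) = ((2 ^ (r+1) : ℕ) : ℤ) := by push_cast; omega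
              exact_mod_cast h1
            have hrawRr : rawR = 7 - r := by
              have h1 : r = 7 - rawR := by rw [hrdef, hDf]; simp
              omega
            by_cases hpow : v = 2 ^ k
            · have hknz : 1 ≤ k := by
                rcases Nat.eq_zero_or_pos k with h0 | h
                · exfalso; rw [h0, pow_zero] at hpow; omega
                · exact h
              have hrk1 : r + 1 = k := by
                have h1 : 2 ^ r < v := by rw [pow_succ] at hrv; omega
                have h2 : v ≤ 2 ^ (r + 1) := by omega
                rw [hpow] at h1 h2
                have h3 := (Nat.pow_lt_pow_iff_right (by norm_num : 1 < 2)).mp h1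
                have h4 := (Nat.pow_le_pow_iff_right (by norm_num : 1 < 2)).mp h2
                omega
              have hveq : v = 2 ^ (r + 1) := by rw [hpow, ← hrk1]
              have hcc0 : cc = 0 := by omega
              have ha : Nat.findGreatest (fun i => 2 ^ i ∣ (v - 2 ^ k)) k = k := by
                have h1 : v - 2 ^ k = 0 := by omega
                rw [h1]
                exact le_antisymm (Nat.findGreatest_le k) (Nat.le_findGreatest le_rfl (dvd_zero _))
              rw [if_pos hpow, ha] at hℓ
              rcases Nat.lt_or_ge rest.length 4 with hL4 | hL4
              · have hb3 : Nat.findGreatest (fun i => 2 ^ i ∣ k) 3 ≤ 3 := Nat.findGreatest_le 3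
                rcases (by omega : rest.length = 1 ∨ rest.length = 2 ∨ rest.length = 3)
                  with h1 | h2 | h3
                · have e1 : rest.getD 1 false = false := List.getD_eq_default _ _ (by omega)
                  have e2 : rest.getD 2 false = false := List.getD_eq_default _ _ (by omega)
                  have e3 : rest.getD 3 false = false := List.getD_eq_default _ _ (by omega)
                  rw [e1, e2, e3] at hrawRdef
                  simp [bitsToNat] at hrawRdef
                  have hb : Nat.findGreatest (fun i => 2 ^ i ∣ k) 3 = 3 :=
                    le_antisymm hb3 (Nat.le_findGreatest le_rfl (by
                      have hk8 : k = 8 := by omega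
                      have h8 : (2:ℕ)^3 = 8 := by norm_num
                      rw [hk8, h8]))
                  omega
                · have e2 : rest.getD 2 false = false := List.getD_eq_default _ _ (by omega)
                  have e3 : rest.getD 3 false = false := List.getD_eq_default _ _ (by omega)
                  rw [e2, e3] at hrawRdef
                  have hdv : 4 ∣ rawR := by
                    cases hg : rest.getD 1 false <;> rw [hg] at hrawRdef <;>
                      simp [bitsToNat] at hrawRdef <;> omega
                  have hb : 2 ≤ Nat.findGreatest (fun i => 2 ^ i ∣ k) 3 :=
                    Nat.le_findGreatest (by norm_num)
                      (by have h4 : (2:ℕ)^2 = 4 := by norm_num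
                          rw [h4]; omega)
                  omega
                · have e3 : rest.getD 3 false = false := List.getD_eq_default _ _ (by omega)
                  rw [e3] at hrawRdef
                  have hdv : 2 ∣ rawR := by
                    cases hg1 : rest.getD 1 false <;> cases hg2 : rest.getD 2 false <;>
                      rw [hg1, hg2] at hrawRdef <;>
                      simp [bitsToNat] at hrawRdef <;> omega
                  have hb : 1 ≤ Nat.findGreatest (fun i => 2 ^ i ∣ k) 3 :=
                    Nat.le_findGreatest (by norm_num)
                      (by have h4 : (2:ℕ)^1 = 2 := by norm_num
                          rw [h4]; omega)
                  omega
              · omega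
            · rw [if_neg hpow] at hℓ
              have hrk : r = k := by
                have h1 : 2 ^ r < v := by rw [pow_succ] at hrv; omega
                have h2 : v ≤ 2 ^ (r + 1) := by omega
                have h3 : 2 ^ k < v := by
                  rcases Nat.lt_or_ge (2 ^ k) v with h | h
                  · exact h
                  · exfalso; apply hpow; omega
                have h4 := (Nat.pow_lt_pow_iff_right (by norm_num : 1 < 2)).mp
                  (lt_of_lt_of_le h3 h2)
                have h5 := (Nat.pow_lt_pow_iff_right (by norm_num : 1 < 2)).mp
                  (lt_of_lt_of_le h1 (le_of_lt hk2))
                omega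
              have hccne : cc ≠ 0 := by
                intro h0
                rw [h0, hrk] at hrv
                omega
              have hvk : (v - 2 ^ k) + cc = 2 ^ k := by
                rw [hrk, pow_succ] at hrv
                omega
              have hdvd : 2 ^ (r - C.length) ∣ (v - 2 ^ k) := by
                have hd1 : 2 ^ (r - C.length) ∣ cc := by rw [hccmul]; exact dvd_mul_left _ _
                have hd2 : (2:ℕ) ^ (r - C.length) ∣ 2 ^ k := pow_dvd_pow 2 (by omega)
                have h5 : v - 2 ^ k = 2 ^ k - cc := by omega
                rw [h5]
                exact Nat.dvd_sub hd2 hd1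
              have haa : r - C.length ≤ Nat.findGreatest (fun i => 2 ^ i ∣ (v - 2 ^ k)) k :=
                Nat.le_findGreatest (by omega) hdvd
              have hklt : Nat.findGreatest (fun i => 2 ^ i ∣ (v - 2 ^ k)) k < k := by
                rcases Nat.lt_or_ge (Nat.findGreatest (fun i => 2 ^ i ∣ (v - 2 ^ k)) k) k with h | h
                · exact h
                · exfalso
                  have hle := Nat.findGreatest_le (P := fun i => 2 ^ i ∣ (v - 2 ^ k)) k
                  have heqk : Nat.findGreatest (fun i => 2 ^ i ∣ (v - 2 ^ k)) k = k := by omega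
                  have hk0 : k ≠ 0 := by
                    intro h0
                    rw [h0] at hk2
                    norm_num at hk2
                    omega
                  have hPk := Nat.findGreatest_of_ne_zero heqk hk0
                  have hpos : 0 < v - 2 ^ k := by
                    rw [hrk] at hcclti
                    omega
                  have := Nat.le_of_dvd hpos hPk
                  omega
              omega
        · rw [if_neg hwv1] at hℓ
          have habsne : m.natAbs ≠ 2 ^ (v - 1) := by
            intro habs
            apply hwv1
            have h1 : (2:ℕ) ^ (v-1) ∣ m.natAbs := by rw [habs]
            have := hw2n _ h1
            omega
          have hEe : E = (v:ℤ) - 1 := by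
            rcases (by omega : E = (v:ℤ) - 2 ∨ E = (v:ℤ) - 1) with h | h
            · exfalso
              rw [h] at hmhigh
              have h3 : ((v:ℤ) - 2 + 1) = ((v - 1 : ℕ) : ℤ) := by omega
              rw [h3, zpow_natCast] at hmhigh
              have h4 : m.natAbs ≤ 2 ^ (v-1) := by exact_mod_cast hmhigh
              omega
            · exact h
          have hv2' : 2 ≤ v := by omega
          have hcE : c = -(v:ℤ) := by omega
          have hDf : D = false := by
            by_contra hDt
            have hDt' : D = true := by simpa using hDt
            rw [hcdef, hDt'] at hcE
            simp only [if_true] at hcE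
            have hx : (0:ℤ) < 2 ^ r := by positivity
            omega
          have hcE' : -(2:ℤ) ^ (r + 1) + 1 + (cc:ℤ) = -(v:ℤ) := by
            rw [hcdef, hDf] at hcE
            simpa using hcE
          have hrv : v + cc + 1 = 2 ^ (r + 1) := by
            have h1 : ((v + cc + 1 : ℕ) : ℤ) = ((2 ^ (r+1) : ℕ) : ℤ) := by push_cast; omega
            exact_mod_cast h1
          have hrk : r = k := by
            have h1 : 2 ^ r ≤ v := by rw [pow_succ] at hrv; omega
            have h2 : v < 2 ^ (r + 1) := by omega
            have h3 := Nat.log_eq_of_pow_le_of_lt_pow h1 h2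
            omega
          have hvz1 : E = ((v - 1 : ℕ) : ℤ) := by omega
          rw [hvz1, zpow_natCast] at heq
          have hNle : N ≤ 2 ^ P := le_of_lt hNlt
          have heqZ : ((2 * 2 ^ P - N : ℕ) : ℤ) * 2 ^ (v - 1) = (m.natAbs : ℤ) * 2 ^ P := by
            have hQ : ((2 * 2 ^ P - N : ℕ) : ℚ) * 2 ^ (v - 1) = (m.natAbs:ℚ) * 2 ^ P := by
              rw [hmabsm]
              have hNle' : N ≤ 2 * 2 ^ P := by omega
              push_cast [Nat.cast_sub hNle']
              have h2 : ((-2 : ℚ) + (N:ℚ)/2^P) * 2 ^ (v-1) * 2 ^ P = (m:ℚ) * 2 ^ P := by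
                rw [heq]
              have hNP : (N:ℚ)/2^P * 2^P = (N:ℚ) := div_mul_cancel₀ _ (ne_of_gt h2P)
              linear_combination -h2 + (2:ℚ)^(v-1) * hNP
            exact_mod_cast hQ
          have hPbound : v ≤ P + w + 1 := by
            by_contra hcon
            push_neg at hcon
            have hsplit : (2:ℤ) ^ (v - 1) = 2 ^ P * 2 ^ (v - 1 - P) := by
              rw [← pow_add]; congr 1; omega
            have hkey : ((2 * 2 ^ P - N : ℕ) : ℤ) * 2 ^ (v - 1 - P) = (m.natAbs:ℤ) := by
              have h2 : ((2:ℤ) ^ P) ≠ 0 := by positivity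
              apply mul_right_cancel₀ h2
              calc ((2 * 2 ^ P - N : ℕ) : ℤ) * 2 ^ (v - 1 - P) * 2 ^ P
                  = ((2 * 2 ^ P - N : ℕ) : ℤ) * (2 ^ P * 2 ^ (v - 1 - P)) := by ring
                _ = (m.natAbs:ℤ) * 2 ^ P := by rw [← hsplit]; exact heqZ
            have hdvd : (2:ℤ) ^ (v - 1 - P) ∣ m := by
              have h1 : (2:ℤ) ^ (v - 1 - P) ∣ (m.natAbs:ℤ) :=
                ⟨((2 * 2 ^ P - N : ℕ) : ℤ), by rw [← hkey]; ring⟩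
              have h2 : ((m.natAbs:ℤ)) = -m := Int.ofNat_natAbs_of_nonpos (le_of_lt hmneg')
              rw [h2] at h1
              exact (dvd_neg).mp h1
            have := hw2 _ hdvd
            omega
          omega
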